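/- Let (φ, N) be a Weil–Deligne pair on a finite-dimensional Ω-vector space V with φ diagonalizable, and suppose (φ, N) is pure of weight k ∈ ℚ. Then for every integer i ≥ 1 the map N is injective on V_{k+i}, and for every integer i ≥ 0 one has the direct sum decomposition V_{k+i} = N(V_{k+i+2}) ⊕ (V_{k+i} ∩ ker(N^{i+1})). -/

import Mathlib

open Module

section WeilDeligne

variable {Ω V : Type*} [Field Ω] [CharZero Ω] [AddCommGroup V] [Module Ω V]

/-- `α ∈ Ω` is a Weil `q^w`-number: it is algebraic over `ℚ` and for every embedding
`σ : Ω → ℂ` one has `|σ α|² = q^w` (real exponentiation). -/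
def IsWeilNumber (q : ℕ) (w : ℚ) (α : Ω) : Prop :=
  IsAlgebraic ℚ α ∧ ∀ σ : Ω →+* ℂ, ‖σ α‖ ^ 2 = (q : ℝ) ^ (w : ℝ)

/-- The weight-`w` part `V_w` of `V` relative to `φ`: the sum of the generalized
eigenspaces of `φ` for those eigenvalues which are Weil `q^w`-numbers. -/
noncomputable def wdWeightSpace (q : ℕ) (φ : Module.End Ω V) (w : ℚ) : Submodule Ω V :=
  ⨆ α ∈ {α : Ω | IsWeilNumber q w α}, φ.maxGenEigenspace α

/-- `(φ, N)` is mixed: `V` is the internal direct sum of the `V_w`, `w ∈ ℚ`. -/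
def WDMixed (q : ℕ) (φ : Module.End Ω V) : Prop :=
  DirectSum.IsInternal fun w : ℚ => wdWeightSpace q φ w

/-- `(φ, N)` is pure of weight `k`: it is mixed, all weights lie in `k + ℤ`, and for every
`i ≥ 1` the map `N^i` restricts to a bijection from `V_{k+i}` onto `V_{k-i}`. -/
def WDPure (q : ℕ) (φ N : Module.End Ω V) (k : ℚ) : Prop :=
  WDMixed q φ ∧
  (∀ w : ℚ, (¬ ∃ i : ℤ, w = k + i) → wdWeightSpace q φ w = ⊥) ∧
  ∀ i : ℤ, 1 ≤ i →
    (∀ x ∈ wdWeightSpace q φ (k + i), (N ^ i.toNat) x = 0 → x = 0) ∧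
    Submodule.map (N ^ i.toNat) (wdWeightSpace q φ (k + i)) = wdWeightSpace q φ (k - i)

end WeilDeligne


section Aux

variable {Ω V : Type*} [Field Ω] [CharZero Ω] [AddCommGroup V] [Module Ω V]

lemma wd_step {q : ℕ} (hq0 : (q : Ω) ≠ 0) (φ N : Module.End Ω V)
    (hrel : N * φ = (q : Ω) • (φ * N)) (α : Ω) :
    (φ - (α / q) • 1) * N = (q : Ω)⁻¹ • (N * (φ - α • 1)) := by
  have hφN : φ * N = (q : Ω)⁻¹ • (N * φ) := by
    rw [hrel, smul_smul, inv_mul_cancel₀ hq0, one_smul]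
  rw [sub_mul, mul_sub, smul_sub, hφN, smul_mul_assoc, one_mul, mul_smul_comm, mul_one,
    smul_smul, div_eq_inv_mul]

lemma wd_step_pow {q : ℕ} (hq0 : (q : Ω) ≠ 0) (φ N : Module.End Ω V)
    (hrel : N * φ = (q : Ω) • (φ * N)) (α : Ω) (n : ℕ) :
    (φ - (α / q) • 1) ^ n * N = ((q : Ω)⁻¹) ^ n • (N * (φ - α • 1) ^ n) := by
  induction n with
  | zero => simp
  | succ n ih =>
    rw [pow_succ, mul_assoc, wd_step hq0 φ N hrel α, mul_smul_comm, ← mul_assoc, ih,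
      smul_mul_assoc, smul_smul, mul_assoc, ← pow_succ, ← pow_succ']

lemma wd_mapsTo_maxGen {q : ℕ} (hq0 : (q : Ω) ≠ 0) (φ N : Module.End Ω V)
    (hrel : N * φ = (q : Ω) • (φ * N)) (α : Ω) {x : V}
    (hx : x ∈ φ.maxGenEigenspace α) : N x ∈ φ.maxGenEigenspace (α / q) := by
  rw [Module.End.mem_maxGenEigenspace] at hx ⊢
  obtain ⟨n, hn⟩ := hx
  refine ⟨n, ?_⟩
  have h := LinearMap.congr_fun (wd_step_pow hq0 φ N hrel α n) x
  rw [← Module.End.mul_apply, h]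
  simp only [LinearMap.smul_apply, Module.End.mul_apply, hn, map_zero, smul_zero]

lemma isWeilNumber_div {q : ℕ} (hq : 2 ≤ q) {w : ℚ} {α : Ω}
    (h : IsWeilNumber q w α) : IsWeilNumber q (w - 2) (α / (q : Ω)) := by
  have hq0 : (q : ℝ) ≠ 0 := by positivity
  have hqpos : (0 : ℝ) < q := by positivity
  constructor
  · have h1 : IsIntegral ℚ α := h.1.isIntegral
    have h2 : IsIntegral ℚ ((q : Ω)⁻¹) := by
      have : ((q : Ω)⁻¹) = algebraMap ℚ Ω ((q : ℚ)⁻¹) := by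
        push_cast
        simp
      rw [this]
      exact isIntegral_algebraMap
    have := (h1.mul h2).isAlgebraic
    rwa [div_eq_mul_inv]
  · intro σ
    have hσq : σ ((q : Ω)) = (q : ℂ) := map_natCast σ q
    rw [map_div₀, hσq, norm_div, Complex.norm_natCast, div_pow, h.2 σ]
    rw [show ((w - 2 : ℚ) : ℝ) = (w : ℝ) - (2 : ℕ) by push_cast; ring,
      Real.rpow_sub hqpos, Real.rpow_natCast]

lemma wd_map_weight {q : ℕ} (hq : 2 ≤ q) (φ N : Module.End Ω V)
    (hrel : N * φ = (q : Ω) • (φ * N)) (w : ℚ) :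
    Submodule.map N (wdWeightSpace q φ w) ≤ wdWeightSpace q φ (w - 2) := by
  have hq0 : (q : Ω) ≠ 0 := by
    exact_mod_cast Nat.cast_ne_zero.mpr (by omega)
  rw [wdWeightSpace, Submodule.map_iSup]
  refine iSup_le fun α => ?_
  rw [Submodule.map_iSup]
  refine iSup_le fun hα => ?_
  rintro _ ⟨x, hx, rfl⟩
  have h1 : N x ∈ φ.maxGenEigenspace (α / q) := wd_mapsTo_maxGen hq0 φ N hrel α hx
  have h2 : IsWeilNumber q (w - 2) (α / (q : Ω)) := isWeilNumber_div hq hα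
  have hle : φ.maxGenEigenspace (α / (q : Ω)) ≤ wdWeightSpace q φ (w - 2) := by
    rw [wdWeightSpace]
    exact le_iSup_of_le (α / (q : Ω)) (le_iSup_of_le h2 le_rfl)
  exact hle h1

lemma wd_map_weight_pow {q : ℕ} (hq : 2 ≤ q) (φ N : Module.End Ω V)
    (hrel : N * φ = (q : Ω) • (φ * N)) (w : ℚ) (m : ℕ) :
    Submodule.map (N ^ m) (wdWeightSpace q φ w) ≤ wdWeightSpace q φ (w - 2 * m) := by
  induction m with
  | zero =>
    rw [pow_zero, Module.End.one_eq_id, Submodule.map_id]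
    norm_num
  | succ m ih =>
    have : (N ^ (m + 1)) = N ∘ₗ (N ^ m) := by rw [pow_succ']; rfl
    rw [this, Submodule.map_comp]
    refine le_trans (Submodule.map_mono ih) ?_
    refine le_trans (wd_map_weight hq φ N hrel _) ?_
    have : w - 2 * (m : ℚ) - 2 = w - 2 * ((m : ℚ) + 1) := by ring
    rw [this]
    push_cast
    exact le_refl _

end Aux

/-- For a pure Frobenius-semisimple Weil–Deligne pair `(φ, N)` of weight `k`,
`N` is injective on `V_{k+i}` for every `i ≥ 1`, and for every `i ≥ 0` one has the direct
sum decomposition `V_{k+i} = N (V_{k+i+2}) ⊕ (V_{k+i} ∩ ker (N^{i+1}))`. -/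
theorem statement8 {Ω V : Type*} [Field Ω] [CharZero Ω] [IsAlgClosed Ω]
    [AddCommGroup V] [Module Ω V] [FiniteDimensional Ω V]
    (q : ℕ) (hq : 2 ≤ q) (φ N : Module.End Ω V)
    (hφ : IsUnit φ) (hrel : N * φ = (q : Ω) • (φ * N))
    (hdiag : (⨆ α : Ω, φ.eigenspace α) = ⊤)
    (k : ℚ) (hpure : WDPure q φ N k) :
    (∀ i : ℕ, 1 ≤ i → ∀ x ∈ wdWeightSpace q φ (k + i), N x = 0 → x = 0) ∧
    (∀ i : ℕ,
      Disjoint (Submodule.map N (wdWeightSpace q φ (k + i + 2)))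
        (wdWeightSpace q φ (k + i) ⊓ LinearMap.ker (N ^ (i + 1))) ∧
      Submodule.map N (wdWeightSpace q φ (k + i + 2)) ⊔
        (wdWeightSpace q φ (k + i) ⊓ LinearMap.ker (N ^ (i + 1))) =
        wdWeightSpace q φ (k + i)) := by
  have hq0 : (q : Ω) ≠ 0 := Nat.cast_ne_zero.mpr (by omega)
  obtain ⟨hmixed, hbot, hpur⟩ := hpure
  -- injectivity of N^m on V_{k+m} for m ≥ 1, stated with ℕ
  have hinj : ∀ m : ℕ, 1 ≤ m → ∀ x ∈ wdWeightSpace q φ (k + m), (N ^ m) x = 0 → x = 0 := by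
    intro m hm x hx hNx
    obtain ⟨h1, _⟩ := hpur (m : ℤ) (by exact_mod_cast hm)
    refine h1 x ?_ ?_
    · rwa [show ((m : ℤ) : ℚ) = (m : ℚ) by push_cast; ring]
    · rwa [show ((m : ℤ)).toNat = m from Int.toNat_natCast m]
  have hsurj : ∀ m : ℕ, 1 ≤ m →
      Submodule.map (N ^ m) (wdWeightSpace q φ (k + m)) = wdWeightSpace q φ (k - m) := by
    intro m hm
    obtain ⟨_, h2⟩ := hpur (m : ℤ) (by exact_mod_cast hm)
    rwa [show ((m : ℤ) : ℚ) = (m : ℚ) by push_cast; ring,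
      show ((m : ℤ)).toNat = m from Int.toNat_natCast m] at h2
  constructor
  · intro i hi x hx hNx
    refine hinj i hi x hx ?_
    obtain ⟨j, rfl⟩ : ∃ j, i = j + 1 := ⟨i - 1, by omega⟩
    rw [pow_succ, Module.End.mul_apply, hNx, map_zero]
  · intro i
    have hW2 : wdWeightSpace q φ (k + (i : ℚ) + 2) = wdWeightSpace q φ (k + ((i : ℚ) + 2)) := by
      rw [add_assoc]
    have hmapN : Submodule.map N (wdWeightSpace q φ (k + (i : ℚ) + 2)) ≤
        wdWeightSpace q φ (k + i) := by
      refine le_trans (wd_map_weight hq φ N hrel _) ?_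
      rw [show k + (i : ℚ) + 2 - 2 = k + i by ring]
    constructor
    · rw [Submodule.disjoint_def]
      rintro x ⟨y, hy, rfl⟩ hx2
      have hker : (N ^ (i + 1)) (N y) = 0 := by
        have := Submodule.mem_inf.mp hx2
        exact LinearMap.mem_ker.mp this.2
      have hy0 : y = 0 := by
        refine hinj (i + 2) (by omega) y ?_ ?_
        · rw [show k + ((i + 2 : ℕ) : ℚ) = k + (i : ℚ) + 2 by push_cast; ring]
          exact hy
        · rw [show i + 2 = (i + 1) + 1 by ring, pow_succ, Module.End.mul_apply]
          exact hker
      rw [hy0, map_zero]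
    · refine le_antisymm (sup_le hmapN inf_le_left) ?_
      intro x hx
      -- z := N^{i+1} x lands in V_{k - (i+2)}
      have hz : (N ^ (i + 1)) x ∈ wdWeightSpace q φ (k - ((i : ℚ) + 2)) := by
        have := wd_map_weight_pow hq φ N hrel (k + i) (i + 1)
          (Submodule.mem_map_of_mem hx)
        rwa [show k + (i : ℚ) - 2 * ((i + 1 : ℕ) : ℚ) = k - ((i : ℚ) + 2) by
          push_cast; ring] at this
      -- surjectivity of N^{i+2} : V_{k+i+2} → V_{k-(i+2)}
      have hs := hsurj (i + 2) (by omega)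
      rw [show ((i + 2 : ℕ) : ℚ) = (i : ℚ) + 2 by push_cast; ring] at hs
      have : (N ^ (i + 1)) x ∈ Submodule.map (N ^ (i + 2))
          (wdWeightSpace q φ (k + ((i : ℚ) + 2))) := by rw [hs]; exact hz
      obtain ⟨y, hy, hyz⟩ := this
      have hNy : N y ∈ Submodule.map N (wdWeightSpace q φ (k + (i : ℚ) + 2)) := by
        refine Submodule.mem_map_of_mem ?_
        rwa [hW2]
      have hNyW : N y ∈ wdWeightSpace q φ (k + i) := hmapN hNy
      refine Submodule.mem_sup.mpr ⟨N y, hNy, x - N y, ?_, by abel⟩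
      refine Submodule.mem_inf.mpr ⟨Submodule.sub_mem _ hx hNyW, LinearMap.mem_ker.mpr ?_⟩
      rw [map_sub, ← hyz, show i + 2 = (i + 1) + 1 by ring, pow_succ, Module.End.mul_apply,
        sub_self]
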